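/- Let there be n ≥ 2 agents and a finite set M of indivisible chores with additive bi-valued cost functions taking values in {ε, 1} for some 0 ≤ ε < 1. Let M^+ = {e ∈ M : c_i(e) = 1 for all agents i} be the set of consistently large items. If |M^+| ≥ n − 1, then there exists a 2-EFX allocation: an allocation X = (X_1,…,X_n) of M such that for all agents i, j and every e ∈ X_i, c_i(X_i \ {e}) ≤ 2·c_i(X_j). -/

import Mathlib

section helper
variable {ι : Type*} [DecidableEq ι]

lemma rr_exists {n : ℕ} (hn : 0 < n) (c : Fin n → ι → ℝ) :
    ∀ (N : ℕ) (R : Finset ι), R.card ≤ N →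
    (∀ i e, e ∈ R → 0 ≤ c i e) → (∀ i e, e ∈ R → c i e ≤ 1) →
    ∀ (π : Fin n → ℕ), Function.Injective π →
    ∃ Q : Fin n → Finset ι,
      (∀ i, Q i ⊆ R) ∧
      (∀ i j, i ≠ j → Disjoint (Q i) (Q j)) ∧
      (Finset.univ.biUnion Q = R) ∧
      (∀ i j, π i < π j → (Q j).card ≤ (Q i).card ∧ (Q i).card ≤ (Q j).card + 1) ∧
      (∀ i j, π i < π j → ∑ f ∈ Q i, c i f ≤ (∑ f ∈ Q j, c i f) + 1) ∧
      (∀ i j, π j < π i → (Q j).Nonempty →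
        ∃ y ∈ Q j, ∑ f ∈ Q i, c i f ≤ (∑ f ∈ (Q j).erase y, c i f) + 1) := by
  intro N
  induction N with
  | zero =>
      intro R hR _ _ π _
      have hRempty : R = ∅ := Finset.card_eq_zero.mp (Nat.le_zero.mp hR)
      subst hRempty
      refine ⟨fun _ => ∅, ?_, ?_, ?_, ?_, ?_, ?_⟩
      · intro i; exact Finset.Subset.refl _
      · intro i j _; exact Finset.disjoint_empty_left _
      · ext e; simp
      · intro i j _; simp
      · intro i j _; simp
      · intro i j _ h; simp at h
  | succ N ih =>
      intro R hR hc0 hc1 π hπ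
      rcases Finset.eq_empty_or_nonempty R with hRe | hRne
      · subst hRe
        refine ⟨fun _ => ∅, ?_, ?_, ?_, ?_, ?_, ?_⟩
        · intro i; exact Finset.Subset.refl _
        · intro i j _; exact Finset.disjoint_empty_left _
        · ext e; simp
        · intro i j _; simp
        · intro i j _; simp
        · intro i j _ h; simp at h
      · -- pick the agent r with minimal priority
        obtain ⟨r, -, hrmin⟩ :=
          Finset.exists_min_image Finset.univ π ⟨⟨0, hn⟩, Finset.mem_univ _⟩
        have hrlt : ∀ j, j ≠ r → π r < π j := by
          intro j hj
          rcases lt_or_eq_of_le (hrmin j (Finset.mem_univ j)) with h | h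
          · exact h
          · exact absurd (hπ h) (Ne.symm hj)
        -- pick r's favourite item x in R
        obtain ⟨x, hxR, hxmin⟩ := Finset.exists_min_image R (c r) hRne
        set R' := R.erase x with hR'
        have hRpos : 0 < R.card := Finset.card_pos.mpr hRne
        have hR'card : R'.card ≤ N := by
          rw [hR', Finset.card_erase_of_mem hxR]
          omega
        -- new priority function: r becomes last
        set B : ℕ := (Finset.univ.sup π) + 1 with hB
        set π' : Fin n → ℕ := Function.update π r B with hπ'def
        have hπ'r : π' r = B := by simp [hπ'def]
        have hπ'j : ∀ j, j ≠ r → π' j = π j := by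
          intro j hj; simp [hπ'def, Function.update_of_ne hj]
        have hπj_lt_B : ∀ j, j ≠ r → π' j < π' r := by
          intro j hj
          rw [hπ'r, hπ'j j hj, hB]
          exact Nat.lt_succ_of_le (Finset.le_sup (Finset.mem_univ j))
        have hπ'inj : Function.Injective π' := by
          intro a b hab
          by_cases ha : a = r <;> by_cases hb : b = r
          · rw [ha, hb]
          · exfalso
            rw [ha] at hab
            rw [hπ'r, hπ'j b hb] at hab
            have : π b ≤ Finset.univ.sup π := Finset.le_sup (Finset.mem_univ b)
            omega
          · exfalso
            rw [hb] at hab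
            rw [hπ'r, hπ'j a ha] at hab
            have : π a ≤ Finset.univ.sup π := Finset.le_sup (Finset.mem_univ a)
            omega
          · rw [hπ'j a ha, hπ'j b hb] at hab
            exact hπ hab
        have hsubR : R' ⊆ R := Finset.erase_subset _ _
        obtain ⟨Q', hQ'sub, hQ'disj, hQ'union, hS1, hA, hBB⟩ :=
          ih R' hR'card (fun i e he => hc0 i e (hsubR he))
            (fun i e he => hc1 i e (hsubR he)) π' hπ'inj
        have hxnotin : ∀ i, x ∉ Q' i := by
          intro i hx
          have := hQ'sub i hx
          simp [hR'] at this
        set Q : Fin n → Finset ι := Function.update Q' r (insert x (Q' r)) with hQdef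
        have hQr : Q r = insert x (Q' r) := by simp [hQdef]
        have hQj : ∀ j, j ≠ r → Q j = Q' j := by
          intro j hj; simp [hQdef, Function.update_of_ne hj]
        have hcardQr : (Q r).card = (Q' r).card + 1 := by
          rw [hQr]; exact Finset.card_insert_of_notMem (hxnotin r)
        have hsumQr : ∀ i, ∑ f ∈ Q r, c i f = c i x + ∑ f ∈ Q' r, c i f := by
          intro i; rw [hQr]; exact Finset.sum_insert (hxnotin r)
        refine ⟨Q, ?_, ?_, ?_, ?_, ?_, ?_⟩
        · -- subsets
          intro i
          by_cases hi : i = r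
          · subst hi; rw [hQr]
            exact Finset.insert_subset hxR ((hQ'sub _).trans hsubR)
          · rw [hQj i hi]; exact (hQ'sub _).trans hsubR
        · -- pairwise disjoint
          intro i j hij
          by_cases hi : i = r
          · subst hi
            rw [hQr, hQj j (Ne.symm hij)]
            exact Finset.disjoint_insert_left.mpr ⟨hxnotin j, hQ'disj _ _ hij⟩
          · by_cases hj : j = r
            · subst hj
              rw [hQr, hQj i hi]
              exact Finset.disjoint_insert_right.mpr ⟨hxnotin i, hQ'disj _ _ hij⟩
            · rw [hQj i hi, hQj j hj]; exact hQ'disj _ _ hij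
        · -- biUnion
          apply Finset.Subset.antisymm
          · intro e he
            rcases Finset.mem_biUnion.mp he with ⟨i, -, hei⟩
            by_cases hi : i = r
            · subst hi
              rw [hQr] at hei
              rcases Finset.mem_insert.mp hei with h | h
              · rwa [h]
              · exact hsubR (hQ'union ▸ Finset.mem_biUnion.mpr ⟨_, Finset.mem_univ _, h⟩)
            · rw [hQj i hi] at hei
              exact hsubR (hQ'union ▸ Finset.mem_biUnion.mpr ⟨i, Finset.mem_univ i, hei⟩)
          · intro e he
            by_cases hex : e = x
            · subst hex
              exact Finset.mem_biUnion.mpr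
                ⟨r, Finset.mem_univ r, by rw [hQr]; exact Finset.mem_insert_self _ _⟩
            · have hmem : e ∈ R' := by rw [hR']; exact Finset.mem_erase.mpr ⟨hex, he⟩
              rw [← hQ'union] at hmem
              rcases Finset.mem_biUnion.mp hmem with ⟨i, -, hei⟩
              refine Finset.mem_biUnion.mpr ⟨i, Finset.mem_univ i, ?_⟩
              by_cases hi : i = r
              · subst hi; rw [hQr]; exact Finset.mem_insert_of_mem hei
              · rwa [hQj i hi]
        · -- size invariant
          intro i j hij
          by_cases hj : j = r
          · exfalso
            have hir : i ≠ r := fun h => by rw [h, hj] at hij; exact lt_irrefl _ hij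
            rw [hj] at hij
            exact absurd hij (not_lt.mpr (le_of_lt (hrlt i hir)))
          · by_cases hi : i = r
            · subst hi
              obtain ⟨h1a, h1b⟩ := hS1 j i (hπj_lt_B j hj)
              rw [hQj j hj, hcardQr]
              omega
            · have := hS1 i j (by rw [hπ'j i hi, hπ'j j hj]; exact hij)
              rw [hQj i hi, hQj j hj]
              exact this
        · -- (A)
          intro i j hij
          by_cases hj : j = r
          · exfalso
            have hir : i ≠ r := fun h => by rw [h, hj] at hij; exact lt_irrefl _ hij
            rw [hj] at hij
            exact absurd hij (not_lt.mpr (le_of_lt (hrlt i hir)))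
          · by_cases hi : i = r
            · subst hi
              rw [hsumQr i, hQj j hj]
              rcases Finset.eq_empty_or_nonempty (Q' j) with hQ'jemp | hQ'jne
              · have h1 := (hS1 j i (hπj_lt_B j hj)).1
                rw [hQ'jemp] at h1
                simp at h1
                rw [h1, hQ'jemp]
                simp
                exact hc1 i x hxR
              · obtain ⟨y, hy, hle⟩ := hBB i j (hπj_lt_B j hj) hQ'jne
                have hxy : c i x ≤ c i y := hxmin y (hsubR (hQ'sub j hy))
                have hsum : c i y + ∑ f ∈ (Q' j).erase y, c i f = ∑ f ∈ Q' j, c i f :=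
                  Finset.add_sum_erase _ _ hy
                calc c i x + ∑ f ∈ Q' i, c i f
                    ≤ c i y + ((∑ f ∈ (Q' j).erase y, c i f) + 1) := add_le_add hxy hle
                  _ = (∑ f ∈ Q' j, c i f) + 1 := by rw [← hsum]; ring
            · rw [hQj i hi, hQj j hj]
              exact hA i j (by rw [hπ'j i hi, hπ'j j hj]; exact hij)
        · -- (B)
          intro i j hji hQjne
          have hi : i ≠ r := by
            intro h
            rw [h] at hji
            by_cases hj : j = r
            · rw [hj] at hji; exact lt_irrefl _ hji
            · exact absurd hji (not_lt.mpr (le_of_lt (hrlt j hj)))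
          by_cases hj : j = r
          · subst hj
            refine ⟨x, by rw [hQr]; exact Finset.mem_insert_self _ _, ?_⟩
            have herase : (Q j).erase x = Q' j := by
              rw [hQr]; exact Finset.erase_insert (hxnotin _)
            rw [herase, hQj i hi]
            exact hA i j (hπj_lt_B i hi)
          · rw [hQj i hi, hQj j hj]
            rw [hQj j hj] at hQjne
            exact hBB i j (by rw [hπ'j i hi, hπ'j j hj]; exact hji) hQjne

lemma rr_ef1 {n : ℕ} (hn : 0 < n) (c : Fin n → ι → ℝ) (R : Finset ι)
    (hc0 : ∀ i e, e ∈ R → 0 ≤ c i e) (hc1 : ∀ i e, e ∈ R → c i e ≤ 1) :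
    ∃ Q : Fin n → Finset ι,
      (∀ i, Q i ⊆ R) ∧
      (∀ i j, i ≠ j → Disjoint (Q i) (Q j)) ∧
      (Finset.univ.biUnion Q = R) ∧
      (∀ i j, ∑ f ∈ Q i, c i f ≤ (∑ f ∈ Q j, c i f) + 1) := by
  obtain ⟨Q, hsub, hdisj, hunion, hS1, hA, hB⟩ :=
    rr_exists hn c R.card R le_rfl hc0 hc1 (fun i => (i : ℕ)) Fin.val_injective
  refine ⟨Q, hsub, hdisj, hunion, ?_⟩
  intro i j
  rcases lt_trichotomy ((i : ℕ)) ((j : ℕ)) with h | h | h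
  · exact hA i j h
  · have : i = j := Fin.val_injective h
    subst this
    exact le_add_of_nonneg_right zero_le_one
  · rcases Finset.eq_empty_or_nonempty (Q j) with hemp | hne
    · have h1 := (hS1 j i h).1
      rw [hemp] at h1
      simp at h1
      rw [h1, hemp]
      simp
    · obtain ⟨y, hy, hle⟩ := hB i j h hne
      refine hle.trans (add_le_add_left ?_ 1)
      exact Finset.sum_le_sum_of_subset_of_nonneg (Finset.erase_subset _ _)
        (fun e he _ => hc0 i e (hsub j he))

/-- Pregift lemma: if we have pairwise disjoint "pregift" bundles inside `M` that every
agent values at least `1`, and each agent values its own pregift at most `1` more than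
any single item of `M`, then a 2-EFX allocation of `M` exists. -/
lemma pregift_alloc {n : ℕ} (hn : 0 < n) (M : Finset ι) (c : Fin n → ι → ℝ)
    (hc0 : ∀ i e, e ∈ M → 0 ≤ c i e) (hc1 : ∀ i e, e ∈ M → c i e ≤ 1)
    (P : Fin n → Finset ι) (hPM : ∀ i, P i ⊆ M)
    (hPd : ∀ i j, i ≠ j → Disjoint (P i) (P j))
    (hα : ∀ i j, 1 ≤ ∑ f ∈ P j, c i f)
    (hβ : ∀ i, ∀ e ∈ M, (∑ f ∈ P i, c i f) ≤ 1 + c i e) :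
    ∃ X : Fin n → Finset ι,
      (∀ i j, i ≠ j → Disjoint (X i) (X j)) ∧
      (Finset.univ.biUnion X = M) ∧
      (∀ i j : Fin n, ∀ e ∈ X i,
        ∑ f ∈ (X i).erase e, c i f ≤ 2 * ∑ f ∈ X j, c i f) := by
  classical
  set R := M \ Finset.univ.biUnion P with hRdef
  have hRM : R ⊆ M := Finset.sdiff_subset
  obtain ⟨Q, hQsub, hQdisj, hQunion, hQef1⟩ :=
    rr_ef1 hn c R (fun i e he => hc0 i e (hRM he)) (fun i e he => hc1 i e (hRM he))
  have hQM : ∀ i, Q i ⊆ M := fun i => (hQsub i).trans hRM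
  have hPQdisj : ∀ i j, Disjoint (P i) (Q j) := by
    intro i j
    refine Finset.disjoint_left.mpr ?_
    intro a haP haQ
    have h1 : a ∈ Finset.univ.biUnion P := Finset.mem_biUnion.mpr ⟨i, Finset.mem_univ i, haP⟩
    have h2 := hQsub j haQ
    rw [hRdef] at h2
    exact (Finset.mem_sdiff.mp h2).2 h1
  set X : Fin n → Finset ι := fun i => P i ∪ Q i with hXdef
  have hsum : ∀ i j, ∑ f ∈ X j, c i f = (∑ f ∈ P j, c i f) + (∑ f ∈ Q j, c i f) := by
    intro i j
    rw [hXdef]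
    exact Finset.sum_union (hPQdisj j j)
  have hXM : ∀ i, X i ⊆ M := by
    intro i
    rw [hXdef]
    exact Finset.union_subset (hPM i) (hQM i)
  refine ⟨X, ?_, ?_, ?_⟩
  · intro i j hij
    rw [hXdef]
    simp only [Finset.disjoint_union_left, Finset.disjoint_union_right]
    exact ⟨⟨hPd i j hij, hPQdisj j i |>.symm⟩, ⟨hPQdisj i j, hQdisj i j hij⟩⟩
  · apply Finset.Subset.antisymm
    · intro e he
      rcases Finset.mem_biUnion.mp he with ⟨i, -, hei⟩
      exact hXM i hei
    · intro e he
      by_cases hP : e ∈ Finset.univ.biUnion P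
      · rcases Finset.mem_biUnion.mp hP with ⟨i, -, hei⟩
        exact Finset.mem_biUnion.mpr ⟨i, Finset.mem_univ i,
          by rw [hXdef]; exact Finset.mem_union_left _ hei⟩
      · have : e ∈ R := by rw [hRdef]; exact Finset.mem_sdiff.mpr ⟨he, hP⟩
        rw [← hQunion] at this
        rcases Finset.mem_biUnion.mp this with ⟨i, -, hei⟩
        exact Finset.mem_biUnion.mpr ⟨i, Finset.mem_univ i,
          by rw [hXdef]; exact Finset.mem_union_right _ hei⟩
  · intro i j e he
    have heM : e ∈ M := hXM i he
    have herase : ∑ f ∈ (X i).erase e, c i f = (∑ f ∈ X i, c i f) - c i e := by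
      rw [Finset.sum_erase_eq_sub he]
    have hQj0 : 0 ≤ ∑ f ∈ Q j, c i f :=
      Finset.sum_nonneg fun f hf => hc0 i f (hQM j hf)
    have h1 : (∑ f ∈ P i, c i f) ≤ 1 + c i e := hβ i e heM
    have h2 : (∑ f ∈ Q i, c i f) ≤ (∑ f ∈ Q j, c i f) + 1 := hQef1 i j
    have h3 : (1 : ℝ) ≤ ∑ f ∈ P j, c i f := hα i j
    rw [herase, hsum i i, hsum i j]
    linarith

theorem stmt_18' {ι : Type*} [DecidableEq ι] (n : ℕ) (hn : 2 ≤ n) (M : Finset ι)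
    (c : Fin n → ι → ℝ) (ε : ℝ) (hε0 : 0 ≤ ε) (hε1 : ε < 1)
    (hbi : ∀ i, ∀ e ∈ M, c i e = ε ∨ c i e = 1)
    (Mplus : Finset ι)
    (hMplus : ∀ e, e ∈ Mplus ↔ e ∈ M ∧ ∀ i, c i e = 1)
    (hcard : n - 1 ≤ Mplus.card) :
    ∃ X : Fin n → Finset ι,
      (∀ i j, i ≠ j → Disjoint (X i) (X j)) ∧
      (Finset.univ.biUnion X = M) ∧
      (∀ i j : Fin n, ∀ e ∈ X i,
        ∑ f ∈ (X i).erase e, c i f ≤ 2 * ∑ f ∈ X j, c i f) := by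
  classical
  have hn0 : 0 < n := by omega
  have hMpM : Mplus ⊆ M := fun e he => ((hMplus e).mp he).1
  have hMp1 : ∀ e ∈ Mplus, ∀ i, c i e = 1 := fun e he i => ((hMplus e).mp he).2 i
  have hc0 : ∀ i e, e ∈ M → 0 ≤ c i e := by
    intro i e he
    rcases hbi i e he with h | h
    · rw [h]; exact hε0
    · rw [h]; exact zero_le_one
  have hc1 : ∀ i e, e ∈ M → c i e ≤ 1 := by
    intro i e he
    rcases hbi i e he with h | h
    · rw [h]; exact le_of_lt hε1
    · rw [h]
  have hcε : ∀ i e, e ∈ M → ε ≤ c i e := by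
    intro i e he
    rcases hbi i e he with h | h
    · rw [h]
    · rw [h]; exact le_of_lt hε1
  by_cases hk : n ≤ Mplus.card
  · -- Case (a) : at least n consistently large items
    obtain ⟨T, hTsub, hTcard⟩ := Finset.exists_subset_card_eq hk
    have hTfin : Fintype.card {x // x ∈ T} = n := by rw [Fintype.card_coe]; exact hTcard
    set gE : {x // x ∈ T} ≃ Fin n := Fintype.equivFinOfCardEq hTfin with hgEdef
    set g : Fin n → ι := fun i => ((gE.symm i : {x // x ∈ T}) : ι) with hgdef
    have hgT : ∀ i, g i ∈ T := fun i => (gE.symm i).2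
    have hgMp : ∀ i, g i ∈ Mplus := fun i => hTsub (hgT i)
    have hginj : ∀ i j, i ≠ j → g i ≠ g j := by
      intro i j hij hgij
      apply hij
      have h1 : (gE.symm i : {x // x ∈ T}) = gE.symm j := Subtype.ext hgij
      have := congrArg gE h1
      simpa using this
    apply pregift_alloc hn0 M c hc0 hc1 (fun i => {g i})
    · intro i
      intro a ha
      rw [Finset.mem_singleton] at ha
      rw [ha]
      exact hMpM (hgMp i)
    · intro i j hij
      rw [Finset.disjoint_singleton]
      exact hginj i j hij
    · intro i j
      rw [Finset.sum_singleton, hMp1 _ (hgMp j) i]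
    · intro i e heM
      rw [Finset.sum_singleton, hMp1 _ (hgMp i) i]
      linarith [hc0 i e heM]
  · -- exactly n - 1 consistently large items
    have hMpcard : Mplus.card = n - 1 := by omega
    set pool : Fin n → Finset ι := fun i => (M \ Mplus).filter (fun e => c i e = ε)
      with hpooldef
    have hpoolM : ∀ i, pool i ⊆ M := fun i =>
      (Finset.filter_subset _ _).trans Finset.sdiff_subset
    by_cases hbig : ∃ i, (1 : ℝ) ≤ ε * ((pool i).card : ℝ)
    · -- Case (b) : some agent has a big pool of small items
      obtain ⟨i₀, hi₀⟩ := hbig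
      have hεpos : 0 < ε := by
        rcases eq_or_lt_of_le hε0 with h | h
        · rw [← h] at hi₀; norm_num at hi₀
        · exact h
      set s₀ : ℕ := ⌈1 / ε⌉₊ with hs₀def
      have h1ε : (1 : ℝ) / ε ≤ ((pool i₀).card : ℝ) := by
        rw [div_le_iff₀ hεpos]
        linarith [hi₀]
      have hs₀le : s₀ ≤ (pool i₀).card := by
        rw [hs₀def]
        exact_mod_cast Nat.ceil_le.mpr h1ε
      obtain ⟨B₀, hB₀sub, hB₀card⟩ := Finset.exists_subset_card_eq hs₀le
      have hB₀mem : ∀ e ∈ B₀, e ∈ M ∧ e ∉ Mplus ∧ c i₀ e = ε := by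
        intro e he
        have h1 := Finset.mem_filter.mp (hB₀sub he)
        have h2 := Finset.mem_sdiff.mp h1.1
        exact ⟨h2.1, h2.2, h1.2⟩
      have hεs₀low : (1 : ℝ) ≤ ε * (s₀ : ℝ) := by
        have h1 := Nat.le_ceil ((1 : ℝ) / ε)
        have h2 : ε * ((1 : ℝ) / ε) ≤ ε * (s₀ : ℝ) :=
          mul_le_mul_of_nonneg_left h1 hε0
        rwa [mul_one_div, div_self (ne_of_gt hεpos)] at h2
      have hεs₀hi : ε * (s₀ : ℝ) ≤ 1 + ε := by
        have h1 : ((s₀ : ℝ)) < 1 / ε + 1 := Nat.ceil_lt_add_one (by positivity)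
        have h2 : ε * (s₀ : ℝ) ≤ ε * (1 / ε + 1) :=
          mul_le_mul_of_nonneg_left (le_of_lt h1) hε0
        calc ε * (s₀ : ℝ) ≤ ε * (1 / ε + 1) := h2
          _ = 1 + ε := by field_simp
      have hsumB₀ : ∑ f ∈ B₀, c i₀ f = (s₀ : ℝ) * ε := by
        rw [Finset.sum_congr rfl (fun e he => (hB₀mem e he).2.2), Finset.sum_const,
          nsmul_eq_mul, hB₀card]
      have hsumB₀ge : ∀ i, (1 : ℝ) ≤ ∑ f ∈ B₀, c i f := by
        intro i
        have h1 : ∑ f ∈ B₀, ε ≤ ∑ f ∈ B₀, c i f :=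
          Finset.sum_le_sum (fun e he => hcε i e (hB₀mem e he).1)
        rw [Finset.sum_const, nsmul_eq_mul, hB₀card] at h1
        calc (1 : ℝ) ≤ ε * (s₀ : ℝ) := hεs₀low
          _ = (s₀ : ℝ) * ε := mul_comm _ _
          _ ≤ _ := h1
      have hceq : Fintype.card ↥(Finset.univ.erase i₀) =
          Fintype.card ↥Mplus := by
        rw [Fintype.card_coe, Fintype.card_coe,
          Finset.card_erase_of_mem (Finset.mem_univ _), hMpcard, Finset.card_univ,
          Fintype.card_fin]
      set E2 : ↥(Finset.univ.erase i₀) ≃ ↥Mplus :=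
        Fintype.equivOfCardEq hceq with hE2def
      set gb : ∀ i : Fin n, i ≠ i₀ → ι :=
        fun i h => (E2 ⟨i, Finset.mem_erase.mpr ⟨h, Finset.mem_univ i⟩⟩ : ι) with hgbdef
      have hgbMp : ∀ i h, gb i h ∈ Mplus := fun i h =>
        (E2 ⟨i, Finset.mem_erase.mpr ⟨h, Finset.mem_univ i⟩⟩).2
      have hgbne : ∀ i j hi hj, i ≠ j → gb i hi ≠ gb j hj := by
        intro i j hi hj hij heq
        apply hij
        rw [hgbdef] at heq
        exact congrArg Subtype.val (E2.injective (Subtype.ext heq))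
      set P : Fin n → Finset ι := fun i =>
        if h : i = i₀ then B₀ else {gb i h} with hPdef
      have hPi₀ : P i₀ = B₀ := by rw [hPdef]; simp
      have hPne : ∀ i (h : i ≠ i₀), P i = {gb i h} := by
        intro i h; rw [hPdef]; simp [h]
      apply pregift_alloc hn0 M c hc0 hc1 P
      · intro i
        by_cases h : i = i₀
        · rw [h, hPi₀]; exact fun a ha => (hB₀mem a ha).1
        · rw [hPne i h]
          intro a ha
          rw [Finset.mem_singleton] at ha
          rw [ha]
          exact hMpM (hgbMp i h)
      · intro i j hij
        by_cases hi : i = i₀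
        · subst hi
          have hj : j ≠ i := Ne.symm hij
          rw [hPi₀, hPne j hj]
          rw [Finset.disjoint_singleton_right]
          intro hmem
          exact (hB₀mem _ hmem).2.1 (hgbMp j hj)
        · by_cases hj : j = i₀
          · subst hj
            rw [hPi₀, hPne i hi]
            rw [Finset.disjoint_singleton_left]
            intro hmem
            exact (hB₀mem _ hmem).2.1 (hgbMp i hi)
          · rw [hPne i hi, hPne j hj, Finset.disjoint_singleton]
            exact hgbne i j hi hj hij
      · intro i j
        by_cases h : j = i₀
        · rw [h, hPi₀]; exact hsumB₀ge i
        · rw [hPne j h, Finset.sum_singleton, hMp1 _ (hgbMp j h) i]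
      · intro i e heM
        by_cases h : i = i₀
        · subst h
          rw [hPi₀, hsumB₀]
          have := hcε i e heM
          calc (s₀ : ℝ) * ε = ε * (s₀ : ℝ) := mul_comm _ _
            _ ≤ 1 + ε := hεs₀hi
            _ ≤ 1 + c i e := by linarith
        · rw [hPne i h, Finset.sum_singleton, hMp1 _ (hgbMp i h) i]
          linarith [hc0 i e heM]
    · -- Case (c) : all pools are small; cascade construction
      push_neg at hbig
      set E : Finset ι := M \ Mplus with hEdef
      have hEM : E ⊆ M := Finset.sdiff_subset
      set Y : Fin n → Finset ι := fun i =>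
        E.filter (fun e => c i e = ε ∧ ∀ l, l < i → c l e ≠ ε) with hYdef
      have hYE : ∀ i, Y i ⊆ E := fun i => Finset.filter_subset _ _
      have hYM : ∀ i, Y i ⊆ M := fun i => (hYE i).trans hEM
      have hYmem : ∀ i, ∀ e ∈ Y i,
          e ∈ E ∧ c i e = ε ∧ ∀ l, l < i → c l e ≠ ε := by
        intro i e he
        have h1 := Finset.mem_filter.mp he
        exact ⟨h1.1, h1.2.1, h1.2.2⟩
      have hYpool : ∀ i, Y i ⊆ pool i := by
        intro i e he
        obtain ⟨h1, h2, -⟩ := hYmem i e he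
        rw [hpooldef]
        exact Finset.mem_filter.mpr ⟨h1, h2⟩
      have hYdisj : ∀ i j, i ≠ j → Disjoint (Y i) (Y j) := by
        intro i j hij
        refine Finset.disjoint_left.mpr ?_
        intro a hai haj
        obtain ⟨-, h2i, h3i⟩ := hYmem i a hai
        obtain ⟨-, h2j, h3j⟩ := hYmem j a haj
        rcases lt_or_gt_of_ne hij with h | h
        · exact h3j i h h2i
        · exact h3i j h h2j
      have hcover : ∀ e ∈ E, ∃ i, e ∈ Y i := by
        intro e he
        have heM : e ∈ M := hEM he
        have henot : e ∉ Mplus := (Finset.mem_sdiff.mp he).2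
        have hex : ∃ i, c i e = ε := by
          by_contra hcon
          push_neg at hcon
          apply henot
          rw [hMplus]
          refine ⟨heM, fun i => ?_⟩
          rcases hbi i e heM with h | h
          · exact absurd h (hcon i)
          · exact h
        set S' : Finset (Fin n) := Finset.univ.filter (fun i => c i e = ε) with hS'def
        have hS'ne : S'.Nonempty := by
          obtain ⟨i, hi⟩ := hex
          exact ⟨i, by rw [hS'def]; exact Finset.mem_filter.mpr ⟨Finset.mem_univ i, hi⟩⟩
        set i' := S'.min' hS'ne with hi'def
        have hi'S : i' ∈ S' := S'.min'_mem hS'ne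
        have hi'ε : c i' e = ε := (Finset.mem_filter.mp hi'S).2
        refine ⟨i', ?_⟩
        rw [hYdef]
        refine Finset.mem_filter.mpr ⟨he, hi'ε, ?_⟩
        intro l hl hlε
        have : i' ≤ l := Finset.min'_le _ _ (by
          rw [hS'def]; exact Finset.mem_filter.mpr ⟨Finset.mem_univ l, hlε⟩)
        exact absurd hl (not_lt.mpr this)
      -- the last agent with a nonempty bucket
      set S : Finset (Fin n) := Finset.univ.filter (fun i => (Y i).Nonempty) with hSdef
      set j0 : Fin n := if hS : S.Nonempty then S.max' hS else ⟨n - 1, by omega⟩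
        with hj0def
      have hle_j0 : ∀ i, (Y i).Nonempty → i ≤ j0 := by
        intro i hi
        have hiS : i ∈ S := by rw [hSdef]; exact Finset.mem_filter.mpr ⟨Finset.mem_univ i, hi⟩
        have hS : S.Nonempty := ⟨i, hiS⟩
        rw [hj0def, dif_pos hS]
        exact Finset.le_max' _ _ hiS
      have hYj0 : S.Nonempty → (Y j0).Nonempty := by
        intro hS
        rw [hj0def, dif_pos hS]
        exact (Finset.mem_filter.mp (S.max'_mem hS)).2
      -- the bijection between the other agents and Mplus
      have hceq : Fintype.card ↥(Finset.univ.erase j0) = Fintype.card ↥Mplus := by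
        rw [Fintype.card_coe, Fintype.card_coe,
          Finset.card_erase_of_mem (Finset.mem_univ _), hMpcard, Finset.card_univ,
          Fintype.card_fin]
      set E2 : ↥(Finset.univ.erase j0) ≃ ↥Mplus := Fintype.equivOfCardEq hceq with hE2def
      set gb : ∀ i : Fin n, i ≠ j0 → ι :=
        fun i h => (E2 ⟨i, Finset.mem_erase.mpr ⟨h, Finset.mem_univ i⟩⟩ : ι) with hgbdef
      have hgbMp : ∀ i h, gb i h ∈ Mplus := fun i h =>
        (E2 ⟨i, Finset.mem_erase.mpr ⟨h, Finset.mem_univ i⟩⟩).2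
      have hgbne : ∀ i j hi hj, i ≠ j → gb i hi ≠ gb j hj := by
        intro i j hi hj hij heq
        apply hij
        rw [hgbdef] at heq
        exact congrArg Subtype.val (E2.injective (Subtype.ext heq))
      have hgbnotY : ∀ i h j, gb i h ∉ Y j := by
        intro i h j hmem
        have h1 := hYE j hmem
        rw [hEdef] at h1
        exact (Finset.mem_sdiff.mp h1).2 (hgbMp i h)
      set X : Fin n → Finset ι := fun i =>
        if h : i = j0 then Y j0 else insert (gb i h) (Y i) with hXdef
      have hXj0 : X j0 = Y j0 := by rw [hXdef]; simp
      have hXne : ∀ i (h : i ≠ j0), X i = insert (gb i h) (Y i) := by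
        intro i h; rw [hXdef]; simp [h]
      have hXM : ∀ i, X i ⊆ M := by
        intro i
        by_cases h : i = j0
        · rw [h, hXj0]; exact hYM j0
        · rw [hXne i h]
          exact Finset.insert_subset (hMpM (hgbMp i h)) (hYM i)
      -- sums of buckets
      have hYsum : ∀ i, ∑ f ∈ Y i, c i f = ((Y i).card : ℝ) * ε := by
        intro i
        rw [Finset.sum_congr rfl (fun e he => (hYmem i e he).2.1), Finset.sum_const,
          nsmul_eq_mul]
      have hYlt1 : ∀ i, ∑ f ∈ Y i, c i f < 1 := by
        intro i
        rw [hYsum i]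
        have h1 : ((Y i).card : ℝ) ≤ ((pool i).card : ℝ) := by
          exact_mod_cast Finset.card_le_card (hYpool i)
        have h2 := hbig i
        calc ((Y i).card : ℝ) * ε = ε * ((Y i).card : ℝ) := mul_comm _ _
          _ ≤ ε * ((pool i).card : ℝ) := mul_le_mul_of_nonneg_left h1 hε0
          _ < 1 := h2
      have hYnonneg : ∀ i j, 0 ≤ ∑ f ∈ Y j, c i f := by
        intro i j
        exact Finset.sum_nonneg fun f hf => hc0 i f (hYM j hf)
      have hXnonneg : ∀ i j, 0 ≤ ∑ f ∈ X j, c i f := by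
        intro i j
        exact Finset.sum_nonneg fun f hf => hc0 i f (hXM j hf)
      -- if i < j0 then everything in Y j0 costs 1 to agent i
      have hYj0cost : ∀ i, i < j0 → ∀ f ∈ Y j0, c i f = 1 := by
        intro i hi f hf
        obtain ⟨hfE, -, h3⟩ := hYmem j0 f hf
        rcases hbi i f (hEM hfE) with h | h
        · exact absurd h (h3 i hi)
        · exact h
      have hXj0ge : ∀ i, i < j0 → (Y j0).Nonempty → (1:ℝ) ≤ ∑ f ∈ X j0, c i f := by
        intro i hi hne
        rw [hXj0]
        rw [Finset.sum_congr rfl (hYj0cost i hi), Finset.sum_const, nsmul_eq_mul, mul_one]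
        exact_mod_cast Finset.card_pos.mpr hne
      have hXge1 : ∀ i j (h : j ≠ j0), (1:ℝ) ≤ ∑ f ∈ X j, c i f := by
        intro i j h
        rw [hXne j h, Finset.sum_insert (hgbnotY j h j), hMp1 _ (hgbMp j h) i]
        linarith [hYnonneg i j]
      refine ⟨X, ?_, ?_, ?_⟩
      · -- disjointness
        intro i j hij
        by_cases hi : i = j0
        · have hj : j ≠ j0 := by rw [← hi]; exact Ne.symm hij
          have hij' : j0 ≠ j := by rw [← hi]; exact hij
          rw [hi, hXj0, hXne j hj]
          exact Finset.disjoint_insert_right.mpr ⟨hgbnotY j hj j0, hYdisj j0 j hij'⟩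
        · by_cases hj : j = j0
          · have hij' : i ≠ j0 := by rw [← hj]; exact hij
            rw [hj, hXj0, hXne i hi]
            exact Finset.disjoint_insert_left.mpr ⟨hgbnotY i hi j0, hYdisj i j0 hij'⟩
          · rw [hXne i hi, hXne j hj]
            refine Finset.disjoint_insert_left.mpr ⟨?_, ?_⟩
            · intro hmem
              rcases Finset.mem_insert.mp hmem with h | h
              · exact hgbne i j hi hj hij h
              · exact hgbnotY i hi j h
            · exact Finset.disjoint_insert_right.mpr ⟨hgbnotY j hj i, hYdisj i j hij⟩
      · -- biUnion = M
        apply Finset.Subset.antisymm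
        · intro e he
          rcases Finset.mem_biUnion.mp he with ⟨i, -, hei⟩
          exact hXM i hei
        · intro e he
          by_cases hMp : e ∈ Mplus
          · set p := E2.symm ⟨e, hMp⟩ with hpdef
            have hpne : (p : Fin n) ≠ j0 := (Finset.mem_erase.mp p.2).1
            refine Finset.mem_biUnion.mpr ⟨(p : Fin n), Finset.mem_univ _, ?_⟩
            rw [hXne _ hpne]
            have hgbe : gb (p : Fin n) hpne = e := by
              simp only [hgbdef]
              have h1 : (⟨(p : Fin n), Finset.mem_erase.mpr ⟨hpne, Finset.mem_univ _⟩⟩ :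
                  ↥(Finset.univ.erase j0)) = p := Subtype.ext rfl
              rw [h1, hpdef, Equiv.apply_symm_apply]
            rw [hgbe]
            exact Finset.mem_insert_self _ _
          · have heE : e ∈ E := by rw [hEdef]; exact Finset.mem_sdiff.mpr ⟨he, hMp⟩
            obtain ⟨i, hi⟩ := hcover e heE
            refine Finset.mem_biUnion.mpr ⟨i, Finset.mem_univ i, ?_⟩
            by_cases h : i = j0
            · rw [h] at hi ⊢; rw [hXj0]; exact hi
            · rw [hXne i h]; exact Finset.mem_insert_of_mem hi
      · -- the 2-EFX inequalities
        intro i j e he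
        by_cases hi : i = j0
        · rw [hi] at he ⊢
          rw [hXj0] at he
          rw [hXj0]
          have hLHS : ∑ f ∈ (Y j0).erase e, c j0 f ≤ ∑ f ∈ Y j0, c j0 f :=
            Finset.sum_le_sum_of_subset_of_nonneg (Finset.erase_subset _ _)
              (fun f hf _ => hc0 j0 f (hYM j0 hf))
          by_cases hj : j = j0
          · rw [hj, hXj0]
            linarith [hYnonneg j0 j0]
          · have h1 := hXge1 j0 j hj
            linarith [hYlt1 j0]
        · rw [hXne i hi] at he
          by_cases hYi : Y i = ∅
          · have hegb : e = gb i hi := by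
              rw [hYi] at he
              rcases Finset.mem_insert.mp he with h | h
              · exact h
              · exact absurd h (Finset.notMem_empty e)
            rw [hXne i hi, hYi, hegb, Finset.erase_insert (Finset.notMem_empty _),
              Finset.sum_empty]
            linarith [hXnonneg i j]
          · have hne : (Y i).Nonempty := Finset.nonempty_iff_ne_empty.mpr hYi
            have hij0 : i < j0 := lt_of_le_of_ne (hle_j0 i hne) hi
            have hεle : ε ≤ c i e := hcε i e (hXM i (by rw [hXne i hi]; exact he))
            have hsumXi : ∑ f ∈ X i, c i f = 1 + ∑ f ∈ Y i, c i f := by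
              rw [hXne i hi, Finset.sum_insert (hgbnotY i hi i), hMp1 _ (hgbMp i hi) i]
            have hLHS : ∑ f ∈ (X i).erase e, c i f = (∑ f ∈ X i, c i f) - c i e := by
              rw [Finset.sum_erase_eq_sub (by rw [hXne i hi]; exact he)]
            by_cases hj : j = j0
            · subst hj
              have hge := hXj0ge i hij0 (hYj0 ⟨i, by
                rw [hSdef]; exact Finset.mem_filter.mpr ⟨Finset.mem_univ i, hne⟩⟩)
              rw [hLHS, hsumXi]
              linarith [hYlt1 i]
            · have hge := hXge1 i j hj
              rw [hLHS, hsumXi]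
              linarith [hYlt1 i]

end helper

open Finset

/-- `n ≥ 2` agents with additive bi-valued cost functions taking values in `{ε, 1}`
with `0 ≤ ε < 1`.  Let `M⁺` be the set of consistently large items (cost `1` to
every agent).  If `|M⁺| ≥ n - 1`, then there exists a `2`-EFX allocation. -/
theorem stmt_18 {ι : Type*} [DecidableEq ι] (n : ℕ) (hn : 2 ≤ n) (M : Finset ι)
    (c : Fin n → ι → ℝ) (ε : ℝ) (hε0 : 0 ≤ ε) (hε1 : ε < 1)
    (hbi : ∀ i, ∀ e ∈ M, c i e = ε ∨ c i e = 1)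
    (Mplus : Finset ι)
    (hMplus : ∀ e, e ∈ Mplus ↔ e ∈ M ∧ ∀ i, c i e = 1)
    (hcard : n - 1 ≤ Mplus.card) :
    ∃ X : Fin n → Finset ι,
      (∀ i j, i ≠ j → Disjoint (X i) (X j)) ∧
      (Finset.univ.biUnion X = M) ∧
      (∀ i j : Fin n, ∀ e ∈ X i,
        ∑ f ∈ (X i).erase e, c i f ≤ 2 * ∑ f ∈ X j, c i f) := by
  exact stmt_18' n hn M c ε hε0 hε1 hbi Mplus hMplus hcard
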